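/- arXiv:2602.22825 — 2 statements merged into one kernel-verified Lean document; each statement's English description precedes it below -/
import Mathlib

section
/- For Q(R) = 2·arctan(R²), the function Θ(R) = (1 − 8R⁴·log R − R⁸)/(16R²(1+R⁴)) satisfies Θ''(R) + (1/R)Θ'(R) − (4/R²)·cos(2Q(R))·Θ(R) = 0 for all R > 0. -/
open Real

private lemma hasDerivAt_N {s : ℝ} (hs : 0 < s) :
    HasDerivAt (fun x : ℝ => 1 - 8 * x ^ 4 * Real.log x - x ^ 8)
      (-32 * s ^ 3 * Real.log s - 8 * s ^ 3 - 8 * s ^ 7) s := by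
  have h1 : HasDerivAt (fun x : ℝ => 8 * x ^ 4 * Real.log x)
      (32 * s ^ 3 * Real.log s + 8 * s ^ 3) s := by
    have h := (((hasDerivAt_pow 4 s).mul (Real.hasDerivAt_log hs.ne')).const_mul (8 : ℝ))
    have e : (fun x : ℝ => 8 * (x ^ 4 * Real.log x)) = fun x : ℝ => 8 * x ^ 4 * Real.log x := by
      funext x; ring
    rw [← e]
    refine h.congr_deriv ?_
    field_simp
    ring
  have h2 := ((hasDerivAt_const s (1 : ℝ)).sub h1).sub (hasDerivAt_pow 8 s)
  refine h2.congr_deriv ?_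
  push_cast
  ring

private lemma hasDerivAt_D (s : ℝ) :
    HasDerivAt (fun x : ℝ => 16 * x ^ 2 * (1 + x ^ 4)) (32 * s + 96 * s ^ 5) s := by
  have h := (((hasDerivAt_pow 2 s).const_mul (16 : ℝ)).mul
    ((hasDerivAt_const s (1 : ℝ)).add (hasDerivAt_pow 4 s)))
  have e : (fun x : ℝ => 16 * x ^ 2 * (1 + x ^ 4)) = fun x : ℝ => 16 * x ^ 2 * (1 + x ^ 4) := rfl
  refine h.congr_deriv ?_
  push_cast [Pi.add_apply]
  ring

private lemma hasDerivAt_N' {s : ℝ} (hs : 0 < s) :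
    HasDerivAt (fun x : ℝ => -32 * x ^ 3 * Real.log x - 8 * x ^ 3 - 8 * x ^ 7)
      (-96 * s ^ 2 * Real.log s - 56 * s ^ 2 - 56 * s ^ 6) s := by
  have h1 : HasDerivAt (fun x : ℝ => -32 * x ^ 3 * Real.log x)
      (-96 * s ^ 2 * Real.log s - 32 * s ^ 2) s := by
    have h := (((hasDerivAt_pow 3 s).mul (Real.hasDerivAt_log hs.ne')).const_mul (-32 : ℝ))
    have e : (fun x : ℝ => -32 * (x ^ 3 * Real.log x)) = fun x : ℝ => -32 * x ^ 3 * Real.log x := by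
      funext x; ring
    rw [← e]
    refine h.congr_deriv ?_
    field_simp
    ring
  have h2 := (h1.sub ((hasDerivAt_pow 3 s).const_mul (8 : ℝ))).sub
    ((hasDerivAt_pow 7 s).const_mul (8 : ℝ))
  have e2 : (fun x : ℝ => -32 * x ^ 3 * Real.log x - 8 * x ^ 3 - 8 * x ^ 7)
      = fun x : ℝ => (-32 * x ^ 3 * Real.log x - 8 * x ^ 3) - 8 * x ^ 7 := by
    funext x; ring
  rw [e2]
  refine h2.congr_deriv ?_
  push_cast
  ring

private lemma hasDerivAt_D' (s : ℝ) :
    HasDerivAt (fun x : ℝ => 32 * x + 96 * x ^ 5) (32 + 480 * s ^ 4) s := by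
  have h := ((hasDerivAt_id s).const_mul (32 : ℝ)).add ((hasDerivAt_pow 5 s).const_mul (96 : ℝ))
  refine h.congr_deriv ?_
  push_cast
  ring

private lemma deriv_Theta {s : ℝ} (hs : 0 < s) :
    deriv (fun x : ℝ => (1 - 8 * x ^ 4 * Real.log x - x ^ 8) / (16 * x ^ 2 * (1 + x ^ 4))) s
      = ((-32 * s ^ 3 * Real.log s - 8 * s ^ 3 - 8 * s ^ 7) * (16 * s ^ 2 * (1 + s ^ 4))
          - (1 - 8 * s ^ 4 * Real.log s - s ^ 8) * (32 * s + 96 * s ^ 5))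
        / (16 * s ^ 2 * (1 + s ^ 4)) ^ 2 := by
  have hD0 : (16 * s ^ 2 * (1 + s ^ 4)) ≠ 0 := by positivity
  exact ((hasDerivAt_N hs).div (hasDerivAt_D s) hD0).deriv

/-- For `Q(R) = 2 arctan R²`, the second fundamental solution
`Θ(R) = (1 − 8R⁴ log R − R⁸)/(16R²(1+R⁴))` satisfies
`Θ'' + Θ'/R − (4/R²)cos(2Q(R))Θ = 0` for all `R > 0`. -/
theorem second_solution_Theta :
    ∀ R : ℝ, 0 < R →
      deriv (deriv (fun s : ℝ => (1 - 8 * s ^ 4 * Real.log s - s ^ 8) / (16 * s ^ 2 * (1 + s ^ 4)))) R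
        + (1 / R) * deriv (fun s : ℝ => (1 - 8 * s ^ 4 * Real.log s - s ^ 8) / (16 * s ^ 2 * (1 + s ^ 4))) R
        - (4 / R ^ 2) * Real.cos (2 * (2 * Real.arctan (R ^ 2)))
            * ((1 - 8 * R ^ 4 * Real.log R - R ^ 8) / (16 * R ^ 2 * (1 + R ^ 4)))
      = 0 := by
  intro R hR
  have hD0 : (16 * R ^ 2 * (1 + R ^ 4)) ≠ 0 := by positivity
  -- second derivative
  have hev : deriv (fun x : ℝ => (1 - 8 * x ^ 4 * Real.log x - x ^ 8) / (16 * x ^ 2 * (1 + x ^ 4)))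
      =ᶠ[nhds R] fun x : ℝ =>
        ((-32 * x ^ 3 * Real.log x - 8 * x ^ 3 - 8 * x ^ 7) * (16 * x ^ 2 * (1 + x ^ 4))
          - (1 - 8 * x ^ 4 * Real.log x - x ^ 8) * (32 * x + 96 * x ^ 5))
        / (16 * x ^ 2 * (1 + x ^ 4)) ^ 2 := by
    filter_upwards [eventually_gt_nhds hR] with x hx
    exact deriv_Theta hx
  rw [hev.deriv_eq, deriv_Theta hR]
  -- derivative of the first-derivative expression
  have hA : HasDerivAt (fun x : ℝ =>
      (-32 * x ^ 3 * Real.log x - 8 * x ^ 3 - 8 * x ^ 7) * (16 * x ^ 2 * (1 + x ^ 4))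
        - (1 - 8 * x ^ 4 * Real.log x - x ^ 8) * (32 * x + 96 * x ^ 5))
      ((-96 * R ^ 2 * Real.log R - 56 * R ^ 2 - 56 * R ^ 6) * (16 * R ^ 2 * (1 + R ^ 4))
        + (-32 * R ^ 3 * Real.log R - 8 * R ^ 3 - 8 * R ^ 7) * (32 * R + 96 * R ^ 5)
        - ((-32 * R ^ 3 * Real.log R - 8 * R ^ 3 - 8 * R ^ 7) * (32 * R + 96 * R ^ 5)
          + (1 - 8 * R ^ 4 * Real.log R - R ^ 8) * (32 + 480 * R ^ 4))) R :=
    ((hasDerivAt_N' hR).mul (hasDerivAt_D R)).sub ((hasDerivAt_N hR).mul (hasDerivAt_D' R))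
  have hB : HasDerivAt (fun x : ℝ => (16 * x ^ 2 * (1 + x ^ 4)) ^ 2)
      (2 * (16 * R ^ 2 * (1 + R ^ 4)) ^ 1 * (32 * R + 96 * R ^ 5)) R := by
    have := (hasDerivAt_D R).pow 2
    refine this.congr_deriv ?_
    norm_num
  have hB0 : ((16 * R ^ 2 * (1 + R ^ 4)) ^ 2) ≠ 0 := pow_ne_zero _ hD0
  rw [(hA.fun_div hB hB0).deriv]
  -- cosine identity
  have hcos : Real.cos (2 * (2 * Real.arctan (R ^ 2)))
      = (1 - 6 * R ^ 4 + R ^ 8) / (1 + R ^ 4) ^ 2 := by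
    have h4 : (0:ℝ) < 1 + R ^ 4 := by positivity
    rw [Real.cos_two_mul, Real.cos_two_mul, Real.cos_sq_arctan]
    have : (R ^ 2) ^ 2 = R ^ 4 := by ring
    rw [this]
    field_simp
    ring
  rw [hcos]
  have hR0 : R ≠ 0 := hR.ne'
  have h4 : (1:ℝ) + R ^ 4 ≠ 0 := by positivity
  field_simp
  ring
end

section
/- For the operator H = −∂_r² + 15/(4r²) − 32r²/(1+r⁴)², the function ϕ₀(r) = 4r^{5/2}/(1+r⁴) satisfies Hϕ₀ = 0, ϕ₀ ∈ L²(0,∞), and ‖ϕ₀‖²_{L²(0,∞)} = 2π. -/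
open MeasureTheory Set Filter Real

private lemma rpow_split (r : ℝ) (hr : 0 < r) (n : ℕ) (a : ℝ) (ha : a = 1/2 + n) :
    r ^ a = r ^ ((1:ℝ)/2) * r ^ n := by
  rw [ha, Real.rpow_add hr, Real.rpow_natCast]

private lemma hfderiv (s : ℝ) (hs : 0 < s) :
    HasDerivAt (fun s : ℝ => 4 * s ^ ((5:ℝ)/2) / (1 + s ^ 4))
      ((10 * s ^ ((3:ℝ)/2) - 6 * s ^ ((11:ℝ)/2)) / (1 + s ^ 4) ^ 2) s := by
  have h1 : HasDerivAt (fun s : ℝ => 4 * s ^ ((5:ℝ)/2)) (4 * ((5:ℝ)/2 * s ^ ((5:ℝ)/2 - 1))) s :=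
    (Real.hasDerivAt_rpow_const (Or.inl hs.ne')).const_mul 4
  have h2 : HasDerivAt (fun s : ℝ => 1 + s ^ 4) (4 * s ^ 3) s := by
    simpa using (hasDerivAt_pow 4 s).const_add 1
  have hne : (1 + s ^ 4) ≠ 0 := by positivity
  have := h1.div h2 hne
  convert this using 1
  · rfl
  · rfl
  · rfl
  have e1 : (5:ℝ)/2 - 1 = 3/2 := by norm_num
  rw [e1]
  have e3 : s ^ ((3:ℝ)/2) = s ^ ((1:ℝ)/2) * s ^ (1:ℕ) := rpow_split s hs 1 _ (by norm_num)
  have e5 : s ^ ((5:ℝ)/2) = s ^ ((1:ℝ)/2) * s ^ (2:ℕ) := rpow_split s hs 2 _ (by norm_num)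
  have e11 : s ^ ((11:ℝ)/2) = s ^ ((1:ℝ)/2) * s ^ (5:ℕ) := rpow_split s hs 5 _ (by norm_num)
  rw [e3, e5, e11]
  field_simp
  ring

private lemma hgderiv (s : ℝ) (hs : 0 < s) :
    HasDerivAt (fun s : ℝ => (10 * s ^ ((3:ℝ)/2) - 6 * s ^ ((11:ℝ)/2)) / (1 + s ^ 4) ^ 2)
      ((15 * s ^ ((1:ℝ)/2) - 98 * s ^ ((9:ℝ)/2) + 15 * s ^ ((17:ℝ)/2)) / (1 + s ^ 4) ^ 3) s := by
  have ha : HasDerivAt (fun s : ℝ => 10 * s ^ ((3:ℝ)/2)) (10 * ((3:ℝ)/2 * s ^ ((3:ℝ)/2 - 1))) s :=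
    (Real.hasDerivAt_rpow_const (Or.inl hs.ne')).const_mul 10
  have hb : HasDerivAt (fun s : ℝ => 6 * s ^ ((11:ℝ)/2)) (6 * ((11:ℝ)/2 * s ^ ((11:ℝ)/2 - 1))) s :=
    (Real.hasDerivAt_rpow_const (Or.inl hs.ne')).const_mul 6
  have h2 : HasDerivAt (fun s : ℝ => 1 + s ^ 4) (4 * s ^ 3) s := by
    simpa using (hasDerivAt_pow 4 s).const_add 1
  have hd : HasDerivAt (fun s : ℝ => (1 + s ^ 4) ^ 2)
      (2 * (1 + s ^ 4) ^ 1 * (4 * s ^ 3)) s := h2.pow 2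
  have hne : ((1 + s ^ 4) ^ 2 : ℝ) ≠ 0 := by positivity
  have := (ha.sub hb).div hd hne
  convert this using 1
  · rfl
  · rfl
  · rfl
  have e1 : (3:ℝ)/2 - 1 = 1/2 := by norm_num
  have e2 : (11:ℝ)/2 - 1 = 9/2 := by norm_num
  rw [e1, e2]
  have q1 : s ^ ((1:ℝ)/2) = s ^ ((1:ℝ)/2) * s ^ (0:ℕ) := by simp
  have e3 : s ^ ((3:ℝ)/2) = s ^ ((1:ℝ)/2) * s ^ (1:ℕ) := rpow_split s hs 1 _ (by norm_num)
  have e9 : s ^ ((9:ℝ)/2) = s ^ ((1:ℝ)/2) * s ^ (4:ℕ) := rpow_split s hs 4 _ (by norm_num)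
  have e11 : s ^ ((11:ℝ)/2) = s ^ ((1:ℝ)/2) * s ^ (5:ℕ) := rpow_split s hs 5 _ (by norm_num)
  have e17 : s ^ ((17:ℝ)/2) = s ^ ((1:ℝ)/2) * s ^ (8:ℕ) := rpow_split s hs 8 _ (by norm_num)
  simp only [Pi.sub_apply]
  rw [e3, e9, e11, e17]
  field_simp
  ring

private lemma eigen_eq (r : ℝ) (hr : 0 < r) :
      - deriv (deriv (fun s : ℝ => 4 * s ^ ((5 : ℝ) / 2) / (1 + s ^ 4))) r
        + (15 / (4 * r ^ 2)) * (4 * r ^ ((5 : ℝ) / 2) / (1 + r ^ 4))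
        - (32 * r ^ 2 / (1 + r ^ 4) ^ 2) * (4 * r ^ ((5 : ℝ) / 2) / (1 + r ^ 4)) = 0 := by
  have hev : deriv (fun s : ℝ => 4 * s ^ ((5:ℝ)/2) / (1 + s ^ 4))
      =ᶠ[nhds r] (fun s : ℝ => (10 * s ^ ((3:ℝ)/2) - 6 * s ^ ((11:ℝ)/2)) / (1 + s ^ 4) ^ 2) := by
    filter_upwards [isOpen_Ioi.mem_nhds (show r ∈ Ioi 0 from hr)] with s hs
    exact (hfderiv s hs).deriv
  rw [hev.deriv_eq, (hgderiv r hr).deriv]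
  have hne : (1 + r ^ 4 : ℝ) ≠ 0 := by positivity
  have e1 : r ^ ((1:ℝ)/2) = r ^ ((1:ℝ)/2) * r ^ (0:ℕ) := by simp
  have e5 : r ^ ((5:ℝ)/2) = r ^ ((1:ℝ)/2) * r ^ (2:ℕ) := rpow_split r hr 2 _ (by norm_num)
  have e9 : r ^ ((9:ℝ)/2) = r ^ ((1:ℝ)/2) * r ^ (4:ℕ) := rpow_split r hr 4 _ (by norm_num)
  have e17 : r ^ ((17:ℝ)/2) = r ^ ((1:ℝ)/2) * r ^ (8:ℕ) := rpow_split r hr 8 _ (by norm_num)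
  rw [e5, e9, e17, e1]
  field_simp
  ring

private lemma Fderiv (x : ℝ) (hx : 0 < x) :
    HasDerivAt (fun r : ℝ => 4 * Real.arctan (r ^ 2) - 4 * r ^ 2 / (1 + r ^ 4))
      ((4 * x ^ ((5:ℝ)/2) / (1 + x ^ 4)) ^ 2) x := by
  have h1 : HasDerivAt (fun r : ℝ => 4 * Real.arctan (r ^ 2))
      (4 * (1 / (1 + (x ^ 2) ^ 2) * (2 * x ^ 1))) x := by
    exact ((Real.hasDerivAt_arctan (x ^ 2)).comp x (hasDerivAt_pow 2 x)).const_mul 4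
  have h2 : HasDerivAt (fun r : ℝ => 4 * r ^ 2) (4 * (2 * x ^ 1)) x :=
    (hasDerivAt_pow 2 x).const_mul 4
  have h3 : HasDerivAt (fun r : ℝ => 1 + r ^ 4) (4 * x ^ 3) x := by
    simpa using (hasDerivAt_pow 4 x).const_add 1
  have hne : (1 + x ^ 4 : ℝ) ≠ 0 := by positivity
  have := h1.sub (h2.div h3 hne)
  convert this using 1
  · rfl
  · rfl
  · rfl
  have h5 : (x ^ ((5:ℝ)/2)) ^ 2 = x ^ (5:ℕ) := by
    rw [← Real.rpow_natCast (x ^ ((5:ℝ)/2)) 2, ← Real.rpow_mul hx.le, ← Real.rpow_natCast x 5]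
    norm_num
  rw [div_pow, mul_pow, h5]
  have h12 : (1 + (x ^ 2) ^ 2 : ℝ) ≠ 0 := by positivity
  field_simp
  ring

private lemma Ftendsto :
    Tendsto (fun r : ℝ => 4 * Real.arctan (r ^ 2) - 4 * r ^ 2 / (1 + r ^ 4)) atTop
      (nhds (2 * Real.pi)) := by
  have h1 : Tendsto (fun r : ℝ => 4 * Real.arctan (r ^ 2)) atTop (nhds (4 * (Real.pi / 2))) := by
    exact (((tendsto_nhds_of_tendsto_nhdsWithin Real.tendsto_arctan_atTop).comp
      (tendsto_pow_atTop two_ne_zero)).const_mul 4)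
  have h2 : Tendsto (fun r : ℝ => 4 * r ^ 2 / (1 + r ^ 4)) atTop (nhds 0) := by
    apply squeeze_zero' (g := fun r : ℝ => 4 / r ^ 2)
    · filter_upwards [eventually_ge_atTop (1:ℝ)] with x hx
      positivity
    · filter_upwards [eventually_ge_atTop (1:ℝ)] with x hx
      rw [div_le_div_iff₀ (by positivity) (by positivity)]
      nlinarith
    · have := (tendsto_pow_atTop (two_ne_zero)).inv_tendsto_atTop (α := ℝ)
      have h := this.const_mul (4:ℝ)
      simpa [div_eq_mul_inv] using h
  have := h1.sub h2
  norm_num at this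
  convert this using 2
  ring

/-- For `H = −∂_r² + 15/(4r²) − 32r²/(1+r⁴)²`, the function `ϕ₀(r) = 4r^{5/2}/(1+r⁴)`
satisfies `Hϕ₀ = 0` on `(0,∞)`, lies in `L²(0,∞)`, and `‖ϕ₀‖² = 2π`. -/
theorem threshold_eigenfunction :
    (∀ r : ℝ, 0 < r →
      - deriv (deriv (fun s : ℝ => 4 * s ^ ((5 : ℝ) / 2) / (1 + s ^ 4))) r
        + (15 / (4 * r ^ 2)) * (4 * r ^ ((5 : ℝ) / 2) / (1 + r ^ 4))
        - (32 * r ^ 2 / (1 + r ^ 4) ^ 2) * (4 * r ^ ((5 : ℝ) / 2) / (1 + r ^ 4)) = 0) ∧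
    Integrable (fun r : ℝ => (4 * r ^ ((5 : ℝ) / 2) / (1 + r ^ 4)) ^ 2)
      (volume.restrict (Set.Ioi 0)) ∧
    ∫ r in Set.Ioi (0 : ℝ), (4 * r ^ ((5 : ℝ) / 2) / (1 + r ^ 4)) ^ 2 = 2 * Real.pi := by
  have hcont : ContinuousWithinAt (fun r : ℝ => 4 * Real.arctan (r ^ 2) - 4 * r ^ 2 / (1 + r ^ 4))
      (Ici 0) 0 := by
    apply Continuous.continuousWithinAt
    exact (continuous_const.mul (Real.continuous_arctan.comp (continuous_pow 2))).sub
      ((continuous_const.mul (continuous_pow 2)).div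
        (continuous_const.add (continuous_pow 4)) (fun x => by positivity))
  have hpos : ∀ x ∈ Ioi (0:ℝ), 0 ≤ (4 * x ^ ((5:ℝ)/2) / (1 + x ^ 4)) ^ 2 :=
    fun x _ => sq_nonneg _
  have hderiv := fun x (hx : x ∈ Ioi (0:ℝ)) => Fderiv x hx
  refine ⟨fun r hr => eigen_eq r hr, ?_, ?_⟩
  · exact integrableOn_Ioi_deriv_of_nonneg hcont hderiv hpos Ftendsto
  · have := integral_Ioi_of_hasDerivAt_of_nonneg hcont hderiv hpos Ftendsto
    simpa using this
end
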